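/- If v_1 ≥ v_2 ≥ … ≥ v_K, then the WOWA value is at least the p-weighted mean: Σ_{j=1}^K p_j a_j ≤ wowa_{(v,p)}(a) for every a ∈ ℝ^K. -/

import Mathlib

open Finset

/-- The piecewise linear function `w*` induced by the weight vector `v`:
`w*(0)=0`, `w*(j/K) = ∑_{i≤j} v i`, linear on each `[(j-1)/K, j/K]`. -/
noncomputable def wstar (K : ℕ) (v : Fin K → ℝ) (t : ℝ) : ℝ :=
  ∑ i : Fin K, v i * min 1 (max 0 (t * (K : ℝ) - (i.1 : ℝ)))

lemma clamp_sum : ∀ (K : ℕ) (s : ℝ), 0 ≤ s → s ≤ K →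
    ∑ i ∈ range K, min 1 (max 0 (s - i)) = s := by
  intro K
  induction K with
  | zero => intro s h1 h2; simp at h1 h2 ⊢; linarith
  | succ K ih =>
    intro s h1 h2
    rw [sum_range_succ]
    by_cases hs : s ≤ K
    · rw [ih s h1 hs]
      have : s - K ≤ 0 := by linarith
      rw [max_eq_left this]
      simp
    · push_neg at hs
      have h1' : ∀ i ∈ range K, min 1 (max 0 (s - i)) = 1 := by
        intro i hi
        simp only [mem_range] at hi
        have : (1:ℝ) ≤ s - i := by
          have : (i:ℝ) ≤ (K:ℝ) - 1 := by
            have : (i:ℝ) + 1 ≤ K := by exact_mod_cast hi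
            linarith
          linarith
        rw [min_eq_left]
        rw [max_eq_right] <;> linarith
      rw [Finset.sum_congr rfl h1', Finset.sum_const]
      have hK : s - K ≤ 1 := by push_cast at h2 ⊢; linarith
      have hK0 : 0 ≤ s - K := by linarith
      rw [max_eq_right hK0, min_eq_right hK]
      simp

lemma wstar_zero (K : ℕ) (v : Fin K → ℝ) : wstar K v 0 = 0 := by
  unfold wstar
  apply Finset.sum_eq_zero
  intro i _
  have : max 0 (0 * (K:ℝ) - i.1) = 0 := by
    apply max_eq_left; simp
  rw [this]; simp

lemma wstar_one (K : ℕ) (v : Fin K → ℝ) : wstar K v 1 = ∑ i, v i := by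
  unfold wstar
  apply Finset.sum_congr rfl
  intro i _
  have h1 : (1:ℝ) ≤ 1 * (K:ℝ) - i.1 := by
    have := i.2
    have : (i.1 : ℝ) + 1 ≤ K := by exact_mod_cast this
    linarith
  rw [max_eq_right (by linarith), min_eq_left h1, mul_one]

lemma wstar_ge (K : ℕ) (v : Fin K → ℝ) (hv0 : ∀ j, 0 ≤ v j) (hvs : ∑ j, v j = 1)
    (hvmono : ∀ i j : Fin K, i ≤ j → v j ≤ v i) (t : ℝ) (h0 : 0 ≤ t) (h1 : t ≤ 1) :
    t ≤ wstar K v t := by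
  rcases Nat.eq_zero_or_pos K with hK | hK
  · subst hK; simp at hvs
  set g : Fin K → ℝ := fun i => min 1 (max 0 (t * (K : ℝ) - (i.1 : ℝ))) with hg
  have hganti : ∀ i j : Fin K, i ≤ j → g j ≤ g i := by
    intro i j hij
    apply min_le_min le_rfl
    apply max_le_max le_rfl
    have : (i.1 : ℝ) ≤ j.1 := by exact_mod_cast hij
    linarith
  have hmono : Monovary v g := by
    intro i j hgij
    rcases le_total i j with h | h
    · exact absurd hgij (not_lt.2 (hganti i j h))
    · exact hvmono j i h
  have hcheb := hmono.sum_mul_sum_le_card_mul_sum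
  have hgsum : ∑ i, g i = t * K := by
    rw [hg]
    rw [Fin.sum_univ_eq_sum_range (fun n => min 1 (max 0 (t * (K : ℝ) - (n : ℝ)))) K]
    exact clamp_sum K (t * K) (by positivity) (by have hk : (0:ℝ) ≤ K := Nat.cast_nonneg K; nlinarith)
  rw [hvs, hgsum, one_mul, Fintype.card_fin] at hcheb
  have hwst : wstar K v t = ∑ i, v i * g i := rfl
  rw [hwst]
  have hKpos : (0:ℝ) < K := by exact_mod_cast hK
  nlinarith [hcheb]

lemma sum_Iio_val {K : ℕ} (q : ℕ → ℝ) (j : Fin K) :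
    ∑ i ∈ Finset.Iio j, q i.1 = ∑ n ∈ range j.1, q n := by
  refine Finset.sum_bij' (fun i _ => i.1)
    (fun n hn => (⟨n, lt_trans (mem_range.1 hn) j.2⟩ : Fin K)) ?_ ?_ ?_ ?_ ?_
  · intro i hi; simp only [mem_Iio, Fin.lt_def] at hi; exact mem_range.2 hi
  · intro n hn; simp only [mem_Iio, Fin.lt_def]; exact mem_range.1 hn
  · intro i hi; rfl
  · intro n hn; rfl
  · intro i hi; rfl

lemma sum_Iic_val {K : ℕ} (q : ℕ → ℝ) (j : Fin K) :
    ∑ i ∈ Finset.Iic j, q i.1 = ∑ n ∈ range (j.1 + 1), q n := by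
  refine Finset.sum_bij' (fun i _ => i.1)
    (fun n hn => (⟨n, lt_of_lt_of_le (mem_range.1 hn) j.2⟩ : Fin K)) ?_ ?_ ?_ ?_ ?_
  · intro i hi; simp only [mem_Iic, Fin.le_def] at hi
    exact mem_range.2 (Nat.lt_succ_of_le hi)
  · intro n hn; simp only [mem_Iic, Fin.le_def]
    exact Nat.lt_succ_iff.1 (mem_range.1 hn)
  · intro i hi; rfl
  · intro n hn; rfl
  · intro i hi; rfl
/-- The WOWA weight `ω_j = w*(∑_{i≤j} p_{σ(i)}) - w*(∑_{i<j} p_{σ(i)})`. -/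
noncomputable def wowaWeight (K : ℕ) (v p : Fin K → ℝ) (σ : Equiv.Perm (Fin K))
    (j : Fin K) : ℝ :=
  wstar K v (∑ i ∈ Finset.Iic j, p (σ i)) - wstar K v (∑ i ∈ Finset.Iio j, p (σ i))

/-- The WOWA aggregation of `a` relative to a permutation `σ`
(sorting `a` nonincreasingly gives the WOWA value). -/
noncomputable def wowaW (K : ℕ) (v p : Fin K → ℝ) (σ : Equiv.Perm (Fin K))
    (a : Fin K → ℝ) : ℝ :=
  ∑ j : Fin K, wowaWeight K v p σ j * a (σ j)

/-- For nonincreasing v, WOWA dominates the p-weighted mean. -/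
theorem weighted_mean_le_wowa (K : ℕ) (v p : Fin K → ℝ)
    (hv0 : ∀ j, 0 ≤ v j) (hvs : ∑ j, v j = 1)
    (hvmono : ∀ i j : Fin K, i ≤ j → v j ≤ v i)
    (hp0 : ∀ j, 0 ≤ p j) (hps : ∑ j, p j = 1)
    (a : Fin K → ℝ) (σ : Equiv.Perm (Fin K))
    (hσ : ∀ i j : Fin K, i ≤ j → a (σ j) ≤ a (σ i)) :
    ∑ j, p j * a j ≤ wowaW K v p σ a := by
  rcases Nat.eq_zero_or_pos K with hK0 | hK
  · subst hK0; simp at hps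
  set q : ℕ → ℝ := fun n => if h : n < K then p (σ ⟨n, h⟩) else 0 with hq
  set b : ℕ → ℝ := fun n => if h : n < K then a (σ ⟨n, h⟩) else 0 with hb
  set P : ℕ → ℝ := fun n => ∑ i ∈ range n, q i with hP
  have hq_eq : ∀ i : Fin K, q i.1 = p (σ i) := by
    intro i; simp only [hq, i.2, dif_pos]
  have hb_eq : ∀ i : Fin K, b i.1 = a (σ i) := by
    intro i; simp only [hb, i.2, dif_pos]
  have hq0 : ∀ n, 0 ≤ q n := by
    intro n; simp only [hq]; split
    · apply hp0
    · exact le_refl 0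
  have hPK : P K = 1 := by
    show ∑ i ∈ range K, q i = 1
    rw [← Fin.sum_univ_eq_sum_range q K]
    rw [Finset.sum_congr rfl (fun i _ => hq_eq i), Equiv.sum_comp σ p, hps]
  have hPmono : ∀ m n : ℕ, m ≤ n → P m ≤ P n := by
    intro m n hmn
    exact Finset.sum_le_sum_of_subset_of_nonneg (Finset.range_subset_range.2 hmn)
      (fun i _ _ => hq0 i)
  have hP01 : ∀ n, n ≤ K → 0 ≤ P n ∧ P n ≤ 1 := by
    intro n hn
    constructor
    · exact Finset.sum_nonneg fun i _ => hq0 i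
    · rw [← hPK]; exact hPmono n K hn
  -- the key auxiliary function
  set F : ℕ → ℝ := fun n => wstar K v (P n) - P n with hF
  have hF0 : F 0 = 0 := by
    simp only [hF, hP, Finset.range_zero, Finset.sum_empty, wstar_zero, sub_zero]
  have hFK : F K = 0 := by
    simp only [hF, hPK, wstar_one, hvs, sub_self]
  have hFnonneg : ∀ n, n ≤ K → 0 ≤ F n := by
    intro n hn
    obtain ⟨h0, h1⟩ := hP01 n hn
    simpa [hF] using sub_nonneg.2 (wstar_ge K v hv0 hvs hvmono (P n) h0 h1)
  -- rewrite LHS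
  have hLHS : ∑ j, p j * a j = ∑ n ∈ range K, q n * b n := by
    rw [← Equiv.sum_comp σ (fun j => p j * a j)]
    rw [← Fin.sum_univ_eq_sum_range (fun n => q n * b n) K]
    exact Finset.sum_congr rfl fun i _ => by rw [hq_eq i, hb_eq i]
  -- rewrite RHS
  have hRHS : wowaW K v p σ a
      = ∑ n ∈ range K, (wstar K v (P (n+1)) - wstar K v (P n)) * b n := by
    unfold wowaW wowaWeight
    rw [← Fin.sum_univ_eq_sum_range (fun n => (wstar K v (P (n+1)) - wstar K v (P n)) * b n) K]
    apply Finset.sum_congr rfl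
    intro j _
    have h1 : ∑ i ∈ Finset.Iic j, p (σ i) = P (j.1 + 1) := by
      rw [Finset.sum_congr rfl (fun i _ => (hq_eq i).symm), sum_Iic_val q j]
    have h2 : ∑ i ∈ Finset.Iio j, p (σ i) = P j.1 := by
      rw [Finset.sum_congr rfl (fun i _ => (hq_eq i).symm), sum_Iio_val q j]
    rw [h1, h2, hb_eq j]
  rw [hLHS, hRHS]
  rw [← sub_nonneg, ← Finset.sum_sub_distrib]
  have hqP : ∀ n, q n = P (n+1) - P n := by
    intro n; simp only [hP, Finset.sum_range_succ]; ring
  have hterm : ∀ n, (wstar K v (P (n+1)) - wstar K v (P n)) * b n - q n * b n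
      = b n * (F (n+1) - F n) := by
    intro n; rw [hqP n]; simp only [hF]; ring
  rw [Finset.sum_congr rfl (fun n _ => hterm n)]
  -- Abel summation
  have habel := Finset.sum_range_by_parts b (fun n => F (n+1) - F n) K
  simp only [smul_eq_mul] at habel
  have hG : ∀ n, ∑ i ∈ range n, (F (i+1) - F i) = F n := by
    intro n; rw [Finset.sum_range_sub F n, hF0, sub_zero]
  rw [hG K, hFK, mul_zero, zero_sub] at habel
  rw [habel]
  rw [neg_nonneg]
  apply Finset.sum_nonpos
  intro i hi
  simp only [mem_range] at hi
  rw [hG (i+1)]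
  have hb_mono : b (i+1) - b i ≤ 0 := by
    have hiK : i + 1 < K := by omega
    have := hσ ⟨i, by omega⟩ ⟨i+1, hiK⟩ (by simp [Fin.le_def])
    rw [← hb_eq ⟨i, by omega⟩, ← hb_eq ⟨i+1, hiK⟩] at this
    linarith
  exact mul_nonpos_of_nonpos_of_nonneg hb_mono (hFnonneg (i+1) (by omega))
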